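/- Let L be a finite abstract simplicial complex on vertex set V such that every simplex σ ∈ L is a face of an even number of simplices τ ∈ L with τ ⊋ σ. Define f : {0,1}^V → Z/2 by f(x) = Σ_{σ ∈ L} Π_{v ∈ σ} x_v (mod 2). Then for all x, f(x + 1⃗) + f(x) ≡ |L| (mod 2), where |L| is the total number of simplices of L and 1⃗ is the all-ones vector. In particular, since |L| ≡ χ(L) (mod 2), the diagonal unitary U = Π_{σ∈L} C^{|σ|−1}Z_σ satisfies X̄ U X̄ U = (−1)^{χ(L)}, where X̄ is the global bit-flip. -/

import Mathlib

/-- if every simplex of a finite abstract simplicial complex `L` is a face of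
an even number of strictly larger simplices of `L`, then the boolean function
`f(x) = Σ_{σ∈L} Π_{v∈σ} x_v` over `ℤ/2` satisfies `f(x + 1⃗) + f(x) = |L| (mod 2)`.
In particular, since `|L| ≡ χ(L) (mod 2)`, the unitary `U = Π_σ C^{|σ|−1}Z_σ`
satisfies `X̄ U X̄ U = (−1)^{χ(L)}`. -/
theorem even_coface_flip_parity {V : Type*} [Fintype V] [DecidableEq V]
    (L : Finset (Finset V))
    (hne : ∅ ∉ L)
    (hdown : ∀ σ ∈ L, ∀ τ : Finset V, τ ⊆ σ → τ ≠ ∅ → τ ∈ L)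
    (heven : ∀ σ ∈ L, Even (L.filter (fun τ => σ ⊂ τ)).card) :
    (∀ x : V → ZMod 2,
      (∑ σ ∈ L, ∏ v ∈ σ, (x v + 1)) + ∑ σ ∈ L, ∏ v ∈ σ, x v = (L.card : ZMod 2)) ∧
    ∀ x : V → ZMod 2,
      ((-1 : ℚ) ^ ((∑ σ ∈ L, ∏ v ∈ σ, (x v + 1)) + ∑ σ ∈ L, ∏ v ∈ σ, x v).val)
        = (-1 : ℚ) ^ (∑ σ ∈ L, (-1 : ℤ) ^ (σ.card - 1)) := by
  have key : ∀ x : V → ZMod 2,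
      (∑ σ ∈ L, ∏ v ∈ σ, (x v + 1)) + ∑ σ ∈ L, ∏ v ∈ σ, x v = (L.card : ZMod 2) := by
    intro x
    have hself : ∀ a : ZMod 2, a + a = 0 := by decide
    have expand : ∀ σ : Finset V,
        ∏ v ∈ σ, (x v + 1) = ∑ τ ∈ σ.powerset, ∏ v ∈ τ, x v := by
      intro σ
      rw [Finset.prod_add]
      exact Finset.sum_congr rfl fun τ hτ => by simp
    have hswap :
        (∑ σ ∈ L, ∑ τ ∈ σ.powerset, ∏ v ∈ τ, x v)
          = ∑ τ ∈ insert ∅ L, ∑ σ ∈ L.filter (fun σ => τ ⊆ σ), ∏ v ∈ τ, x v := by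
      refine Finset.sum_comm' ?_
      intro σ τ
      simp only [Finset.mem_powerset, Finset.mem_filter, Finset.mem_insert]
      constructor
      · rintro ⟨hσ, hτ⟩
        refine ⟨⟨hσ, hτ⟩, ?_⟩
        by_cases h : τ = ∅
        · exact Or.inl h
        · exact Or.inr (hdown σ hσ τ hτ h)
      · rintro ⟨⟨hσ, hτ⟩, -⟩
        exact ⟨hσ, hτ⟩
    have hfiber : ∀ τ ∈ L,
        ((L.filter (fun σ => τ ⊆ σ)).card : ZMod 2) = 1 := by
      intro τ hτ
      have hins : L.filter (fun σ => τ ⊆ σ) = insert τ (L.filter (fun σ => τ ⊂ σ)) := by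
        ext σ
        simp only [Finset.mem_filter, Finset.mem_insert]
        constructor
        · rintro ⟨hσ, hsub⟩
          rcases eq_or_ne σ τ with h | h
          · exact Or.inl h
          · exact Or.inr ⟨hσ, lt_of_le_of_ne hsub (Ne.symm h)⟩
        · rintro (rfl | ⟨hσ, hlt⟩)
          · exact ⟨hτ, le_refl _⟩
          · exact ⟨hσ, le_of_lt hlt⟩
      have hτnot : τ ∉ L.filter (fun σ => τ ⊂ σ) := by
        simp only [Finset.mem_filter]
        exact fun h => absurd h.2 (lt_irrefl τ)
      rw [hins, Finset.card_insert_of_notMem hτnot]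
      obtain ⟨k, hk⟩ := heven τ hτ
      rw [hk]
      push_cast
      rw [hself, zero_add]
    calc (∑ σ ∈ L, ∏ v ∈ σ, (x v + 1)) + ∑ σ ∈ L, ∏ v ∈ σ, x v
        = (∑ τ ∈ insert ∅ L, ∑ σ ∈ L.filter (fun σ => τ ⊆ σ), ∏ v ∈ τ, x v)
            + ∑ σ ∈ L, ∏ v ∈ σ, x v := by
          rw [← hswap]; exact congrArg (· + _) (Finset.sum_congr rfl fun σ _ => expand σ)
      _ = ((L.card : ZMod 2) + ∑ τ ∈ L, ∏ v ∈ τ, x v) + ∑ σ ∈ L, ∏ v ∈ σ, x v := by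
          rw [Finset.sum_insert hne]
          congr 1
          congr 1
          · simp only [Finset.prod_empty, Finset.sum_const, nsmul_eq_mul, mul_one]
            congr 1
            exact congrArg Finset.card (Finset.filter_true_of_mem fun σ _ => Finset.empty_subset σ)
          · refine Finset.sum_congr rfl fun τ hτ => ?_
            rw [Finset.sum_const, nsmul_eq_mul, hfiber τ hτ, one_mul]
      _ = (L.card : ZMod 2) := by
          rw [add_assoc, hself, add_zero]
  refine ⟨key, fun x => ?_⟩
  rw [key x]
  have hval : ((L.card : ZMod 2)).val = L.card % 2 := ZMod.val_natCast _ _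
  have hz : (∑ σ ∈ L, (-1 : ℤ) ^ (σ.card - 1)) % 2 = (L.card : ℤ) % 2 := by
    rw [Finset.sum_int_mod]
    have : ∀ σ ∈ L, ((-1 : ℤ) ^ (σ.card - 1)) % 2 = 1 % 2 := by
      intro σ hσ
      rcases Nat.even_or_odd (σ.card - 1) with h | h
      · rw [h.neg_one_pow]
      · rw [h.neg_one_pow]; decide
    rw [Finset.sum_congr rfl this, Finset.sum_const, nsmul_eq_mul]
    push_cast
    omega
  have hparity : Even (∑ σ ∈ L, (-1 : ℤ) ^ (σ.card - 1)) ↔ Even L.card := by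
    rw [Int.even_iff, hz, Nat.even_iff]
    omega
  rw [hval]
  rcases Nat.even_or_odd L.card with h | h
  · rw [Nat.even_iff.mp h, pow_zero, (hparity.mpr h).neg_one_zpow]
  · rw [Nat.odd_iff.mp h, pow_one]
    have : Odd (∑ σ ∈ L, (-1 : ℤ) ^ (σ.card - 1)) := by
      have h1 := Nat.odd_iff.mp h
      rw [Int.odd_iff, hz]
      omega
    rw [this.neg_one_zpow]
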